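/- The number of pairs (M, x) with M a word of length t over alphabet {A,C,G} and x a subsequence of M is at least 3 · 2^{t-1} · (F(t+2) - 1), where F is the Fibonacci sequence with F(1)=1, F(2)=2. -/

import Mathlib

open List Finset

def subsF (w : List (Fin 3)) : Finset (List (Fin 3)) := w.sublists.toFinset

lemma mem_subsF {s w : List (Fin 3)} : s ∈ subsF w ↔ s <+ w := by
  simp [subsF, List.mem_sublists]

lemma subsF_rec {a b : Fin 3} {l : List (Fin 3)} (hab : a ≠ b) :
    (subsF (b :: l)).card + (subsF l).card + 1 ≤ (subsF (a :: b :: l)).card := by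
  classical
  set A := (subsF (b :: l)).image (a :: ·) with hA
  set B := (subsF l).image (b :: ·) with hB
  have hAcard : A.card = (subsF (b :: l)).card :=
    Finset.card_image_of_injective _ (List.cons_injective)
  have hBcard : B.card = (subsF l).card :=
    Finset.card_image_of_injective _ (List.cons_injective)
  have hsub : A ∪ B ∪ {([] : List (Fin 3))} ⊆ subsF (a :: b :: l) := by
    intro s hs
    simp only [Finset.mem_union, Finset.mem_singleton, hA, hB, Finset.mem_image] at hs
    rcases hs with (⟨u, hu, rfl⟩ | ⟨u, hu, rfl⟩) | rfl
    · exact mem_subsF.mpr ((mem_subsF.mp hu).cons_cons a)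
    · exact mem_subsF.mpr (((mem_subsF.mp hu).cons_cons b).cons a)
    · exact mem_subsF.mpr (List.nil_sublist _)
  have hd1 : Disjoint A B := by
    rw [Finset.disjoint_left]
    rintro s hsA hsB
    simp only [hA, hB, Finset.mem_image] at hsA hsB
    obtain ⟨u, _, rfl⟩ := hsA
    obtain ⟨v, _, hv⟩ := hsB
    exact hab (by injection hv.symm)
  have hd2 : Disjoint (A ∪ B) {([] : List (Fin 3))} := by
    rw [Finset.disjoint_right]
    rintro s hs
    simp only [Finset.mem_singleton] at hs
    subst hs
    simp [hA, hB]
  calc (subsF (b :: l)).card + (subsF l).card + 1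
      = (A ∪ B ∪ {([] : List (Fin 3))}).card := by
        rw [Finset.card_union_of_disjoint hd2, Finset.card_union_of_disjoint hd1,
          hAcard, hBcard, Finset.card_singleton]
    _ ≤ _ := Finset.card_le_card hsub

lemma subsF_fib : ∀ n (w : List (Fin 3)), w.Chain' (· ≠ ·) → w.length = n →
    Nat.fib (n + 3) - 1 ≤ (subsF w).card := by
  intro n
  induction n using Nat.strong_induction_on with
  | _ n ih =>
    intro w hc hl
    match n, w, hl with
    | 0, [], _ =>
      have : ([] : List (Fin 3)) ∈ subsF [] := mem_subsF.mpr (List.nil_sublist _)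
      have h := Finset.card_pos.mpr ⟨_, this⟩
      have : Nat.fib (0 + 3) = 2 := by norm_num
      omega
    | 1, [a], _ =>
      have hsub : {([] : List (Fin 3)), [a]} ⊆ subsF [a] := by
        intro s hs
        simp only [Finset.mem_insert, Finset.mem_singleton] at hs
        rcases hs with rfl | rfl
        · exact mem_subsF.mpr (List.nil_sublist _)
        · exact mem_subsF.mpr (List.Sublist.refl _)
      have h2 : ({([] : List (Fin 3)), [a]} : Finset _).card = 2 := by
        rw [Finset.card_insert_of_notMem (by simp)]; rfl
      calc Nat.fib (1 + 3) - 1 = 2 := by norm_num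
        _ = _ := h2.symm
        _ ≤ _ := Finset.card_le_card hsub
    | (m + 2), a :: b :: l, hl =>
      have hab : a ≠ b := (List.isChain_cons_cons.mp hc).1
      have hc2 : (b :: l).Chain' (· ≠ ·) := (List.isChain_cons_cons.mp hc).2
      have hc3 : l.Chain' (· ≠ ·) := List.IsChain.tail hc2
      have hl2 : (b :: l).length = m + 1 := by simpa using hl
      have hl3 : l.length = m := by simpa using hl2
      have h1 := ih (m + 1) (by omega) (b :: l) hc2 hl2
      have h2 := ih m (by omega) l hc3 hl3
      have key := subsF_rec (l := l) hab
      have hfib : Nat.fib (m + 2 + 3) = Nat.fib (m + 1 + 3) + Nat.fib (m + 3) := by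
        rw [show m + 2 + 3 = (m + 3) + 2 by ring, Nat.fib_add_two]; ring_nf
      have hpos : 0 < Nat.fib (m + 3) := Nat.fib_pos.mpr (by omega)
      have hpos2 : 0 < Nat.fib (m + 1 + 3) := Nat.fib_pos.mpr (by omega)
      omega

open List Finset
open Fin.NatCast

def gw (a : Fin 3) : List (Fin 2) → List (Fin 3)
  | [] => [a]
  | b :: bs => a :: gw (a + ((b.val + 1 : ℕ) : Fin 3)) bs

lemma gw_len (bs : List (Fin 2)) : ∀ a, (gw a bs).length = bs.length + 1 := by
  induction bs with
  | nil => intro a; rfl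
  | cons b bs ih => intro a; simp [gw, ih]

lemma gw_cons (bs : List (Fin 2)) (a : Fin 3) : ∃ l, gw a bs = a :: l := by
  cases bs <;> exact ⟨_, rfl⟩

lemma fin3_ne (b : Fin 2) (a : Fin 3) : a ≠ a + ((b.val + 1 : ℕ) : Fin 3) := by
  have h : ((b.val + 1 : ℕ) : Fin 3) ≠ 0 := by fin_cases b <;> decide
  intro hh
  exact h (by simpa using (left_eq_add.mp hh))

lemma gw_chain (bs : List (Fin 2)) : ∀ a, (gw a bs).Chain' (· ≠ ·) := by
  induction bs with
  | nil => intro a; simp [gw, List.Chain']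
  | cons b bs ih =>
    intro a
    obtain ⟨l, hl⟩ := gw_cons bs (a + ((b.val + 1 : ℕ) : Fin 3))
    have := ih (a + ((b.val + 1 : ℕ) : Fin 3))
    rw [hl] at this
    show (a :: gw (a + ((b.val + 1 : ℕ) : Fin 3)) bs).Chain' (· ≠ ·)
    rw [hl, List.Chain', List.isChain_cons_cons]
    exact ⟨fin3_ne b a, this⟩

lemma fin2_cancel {b b' : Fin 2} (h : ((b.val + 1 : ℕ) : Fin 3) = ((b'.val + 1 : ℕ) : Fin 3)) :
    b = b' := by fin_cases b <;> fin_cases b' <;> simp_all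

lemma gw_inj : ∀ (bs bs' : List (Fin 2)) (a a' : Fin 3),
    gw a bs = gw a' bs' → a = a' ∧ bs = bs' := by
  intro bs
  induction bs with
  | nil =>
    intro bs' a a' h
    cases bs' with
    | nil => simpa [gw] using h
    | cons b' t' =>
      have := congrArg List.length h
      rw [gw_len, gw_len] at this
      simp at this
  | cons b t ih =>
    intro bs' a a' h
    cases bs' with
    | nil =>
      have := congrArg List.length h
      rw [gw_len, gw_len] at this
      simp at this
    | cons b' t' =>
      simp only [gw, List.cons.injEq] at h
      obtain ⟨rfl, h2⟩ := h
      obtain ⟨he, rfl⟩ := ih t' _ _ h2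
      exact ⟨rfl, by rw [fin2_cancel (add_left_cancel he)]⟩

theorem stmt10 (t : ℕ) (ht : 1 ≤ t) :
    3 * 2 ^ (t - 1) * (Nat.fib (t + 3) - 1)
      ≤ {p : List (Fin 3) × List (Fin 3) | p.1.length = t ∧ p.2 <+ p.1}.ncard := by
  classical
  set S := {p : List (Fin 3) × List (Fin 3) | p.1.length = t ∧ p.2 <+ p.1} with hS
  -- the target set is finite
  have hfin : S.Finite := by
    apply Set.Finite.subset (Set.Finite.prod (List.finite_length_le (Fin 3) t)
      (List.finite_length_le (Fin 3) t))
    rintro ⟨w, s⟩ ⟨h1, h2⟩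
    exact ⟨by simp [h1], by simpa using h2.length_le.trans (le_of_eq h1)⟩
  -- the finset of special words
  set f : Fin 3 × (Fin (t - 1) → Fin 2) → List (Fin 3) :=
    fun p => gw p.1 (List.ofFn p.2) with hf
  have hfinj : Function.Injective f := by
    rintro ⟨a, v⟩ ⟨a', v'⟩ h
    obtain ⟨h1, h2⟩ := gw_inj _ _ _ _ h
    exact Prod.ext h1 (List.ofFn_injective h2)
  set W : Finset (List (Fin 3)) := Finset.image f Finset.univ with hW
  have hWcard : W.card = 3 * 2 ^ (t - 1) := by
    rw [hW, Finset.card_image_of_injective _ hfinj, Finset.card_univ]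
    simp [Fintype.card_fun]
  have hWlen : ∀ w ∈ W, w.length = t ∧ w.Chain' (· ≠ ·) := by
    intro w hw
    rw [hW, Finset.mem_image] at hw
    obtain ⟨⟨a, v⟩, _, rfl⟩ := hw
    refine ⟨?_, gw_chain _ _⟩
    rw [hf]
    simp only [gw_len, List.length_ofFn]
    omega
  -- the finset of pairs
  set P : Finset (List (Fin 3) × List (Fin 3)) :=
    W.biUnion (fun w => (subsF w).image (fun s => (w, s))) with hP
  have hPcard : 3 * 2 ^ (t - 1) * (Nat.fib (t + 3) - 1) ≤ P.card := by
    rw [hP, Finset.card_biUnion]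
    · calc 3 * 2 ^ (t - 1) * (Nat.fib (t + 3) - 1)
          = ∑ _w ∈ W, (Nat.fib (t + 3) - 1) := by
            rw [Finset.sum_const, hWcard, smul_eq_mul]
        _ ≤ ∑ w ∈ W, ((subsF w).image (fun s => (w, s))).card := by
            apply Finset.sum_le_sum
            intro w hw
            obtain ⟨hl, hc⟩ := hWlen w hw
            rw [Finset.card_image_of_injective _ (fun x y h => by injection h)]
            exact subsF_fib t w hc hl
    · intro w1 _ w2 _ hne
      rw [Function.onFun, Finset.disjoint_left]
      rintro ⟨x, y⟩ hx hy
      simp only [Finset.mem_image] at hx hy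
      obtain ⟨u, _, hu⟩ := hx
      obtain ⟨v, _, hv⟩ := hy
      apply hne
      have h1 : w1 = x := congrArg Prod.fst hu
      have h2 : w2 = x := congrArg Prod.fst hv
      rw [h1, h2]
  have hPS : ↑P ⊆ S := by
    rintro ⟨w, s⟩ hp
    simp only [Finset.coe_biUnion, Set.mem_iUnion, Finset.mem_coe, Finset.mem_image, hP] at hp
    obtain ⟨u, hu, v, hv, huv⟩ := hp
    obtain ⟨rfl, rfl⟩ : u = w ∧ v = s := ⟨congrArg Prod.fst huv, congrArg Prod.snd huv⟩
    exact ⟨(hWlen u hu).1, mem_subsF.mp hv⟩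
  calc 3 * 2 ^ (t - 1) * (Nat.fib (t + 3) - 1) ≤ P.card := hPcard
    _ = (↑P : Set _).ncard := (Set.ncard_coe_finset P).symm
    _ ≤ S.ncard := Set.ncard_le_ncard hPS hfin
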